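/- Let G be a finite abelian group and φ : ℤ^n → G a group homomorphism whose restriction to the Lee sphere S_{n,e} is injective and whose restriction to S_{n,e+1} is surjective. Then the kernel of φ is a linear QPL(n,e) code. -/

import Mathlib

open Set

/-- The Lee (Manhattan) distance between two words in `ℤ^n`. -/
def leeDist {n : ℕ} (v w : Fin n → ℤ) : ℕ := ∑ i, (v i - w i).natAbs

/-- The Lee sphere `S_{n,r}` of radius `r` centered at the origin. -/
def leeSphere (n r : ℕ) : Set (Fin n → ℤ) := {x | leeDist x 0 ≤ r}

/-- `|S_{n,r}|`, the cardinality of the Lee sphere. -/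
noncomputable def sphereCard (n r : ℕ) : ℕ := (leeSphere n r).ncard

/-- `L` is a quasi-perfect `e`-error-correcting Lee code `QPL(n,e)`. -/
def IsQPLCode {n : ℕ} (e : ℕ) (L : Set (Fin n → ℤ)) : Prop :=
  (∀ v ∈ L, ∀ w ∈ L, v ≠ w → 2 * e + 1 ≤ leeDist v w) ∧
  ∀ x : Fin n → ℤ, ∃ c ∈ L, leeDist x c ≤ e + 1

/-- Any word of weight at most `2e` splits as a difference of two words of weight at most `e`. -/
lemma split_lemma {n : ℕ} (e : ℕ) (d : Fin n → ℤ) (hd : ∑ i, (d i).natAbs ≤ 2 * e) :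
    ∃ a b : Fin n → ℤ, (∀ i, a i - b i = d i) ∧
      ∑ i, (a i).natAbs ≤ e ∧ ∑ i, (b i).natAbs ≤ e := by
  classical
  set D : ℕ → ℕ := fun j => if h : j < n then (d ⟨j, h⟩).natAbs else 0 with hD
  set S : ℕ → ℕ := fun k => ∑ j ∈ Finset.range k, D j with hS
  set f : ℕ → ℕ := fun k => min (S k) e with hf
  set A : ℕ → ℕ := fun j => f (j + 1) - f j with hA
  have hSsucc : ∀ k, S (k + 1) = S k + D k := fun k => Finset.sum_range_succ D k
  have hAle : ∀ j, A j ≤ D j := by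
    intro j; simp only [hA, hf, hSsucc]; omega
  have hAf : ∀ j, f j + A j = f (j + 1) := by
    intro j; simp only [hA, hf, hSsucc]; omega
  have htel : ∀ k, ∑ j ∈ Finset.range k, A j = f k := by
    intro k; induction k with
    | zero => simp [hf, hS]
    | succ k ih => rw [Finset.sum_range_succ, ih]; exact hAf k
  have htel2 : ∀ k, ∑ j ∈ Finset.range k, (D j - A j) = S k - f k := by
    intro k; induction k with
    | zero => simp [hS, hf]
    | succ k ih =>
      rw [Finset.sum_range_succ, ih, hSsucc]
      have h1 := hAle k
      have h2 := hAf k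
      have h3 : f k ≤ S k := min_le_left _ _
      have h4 : f (k + 1) ≤ S (k + 1) := min_le_left _ _
      rw [hSsucc] at h4
      omega
  have hDi : ∀ i : Fin n, D (i : ℕ) = (d i).natAbs := by
    intro i; simp [hD, i.isLt]
  have hSn : S n ≤ 2 * e := by
    have : S n = ∑ i, (d i).natAbs := by
      show ∑ j ∈ Finset.range n, D j = _
      rw [← Fin.sum_univ_eq_sum_range D n]
      exact Finset.sum_congr rfl fun i _ => hDi i
    omega
  have hAzero : ∀ i : Fin n, d i = 0 → A (i : ℕ) = 0 := by
    intro i h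
    have hD0 : D (i : ℕ) = 0 := by rw [hDi i, h]; rfl
    have := hAle (i : ℕ); omega
  refine ⟨fun i => (d i).sign * (A (i : ℕ) : ℤ),
    fun i => (d i).sign * (A (i : ℕ) : ℤ) - d i, fun i => by ring, ?_, ?_⟩
  · have key : ∀ i : Fin n, ((d i).sign * (A (i : ℕ) : ℤ)).natAbs = A (i : ℕ) := by
      intro i
      rcases eq_or_ne (d i) 0 with h | h
      · simp [h, hAzero i h]
      · rw [Int.natAbs_mul, Int.natAbs_sign_of_ne_zero h, one_mul, Int.natAbs_natCast]
    calc ∑ i, ((d i).sign * (A (i : ℕ) : ℤ)).natAbs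
        = ∑ i : Fin n, A (i : ℕ) := Finset.sum_congr rfl fun i _ => key i
      _ = ∑ j ∈ Finset.range n, A j := Fin.sum_univ_eq_sum_range A n
      _ = f n := htel n
      _ ≤ e := min_le_right _ _
  · have key : ∀ i : Fin n,
        ((d i).sign * (A (i : ℕ) : ℤ) - d i).natAbs = D (i : ℕ) - A (i : ℕ) := by
      intro i
      rcases eq_or_ne (d i) 0 with h | h
      · simp [h, hAzero i h, hDi i]
      · have hsub : (d i).sign * (A (i : ℕ) : ℤ) - d i
            = (d i).sign * ((A (i : ℕ) : ℤ) - (D (i : ℕ) : ℤ)) := by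
          rw [mul_sub]
          congr 1
          rw [hDi i, Int.sign_mul_natAbs]
        have hle : A (i : ℕ) ≤ D (i : ℕ) := hAle _
        have hcast : ((A (i : ℕ) : ℤ) - (D (i : ℕ) : ℤ))
            = -((D (i : ℕ) - A (i : ℕ) : ℕ) : ℤ) := by push_cast [hle]; ring
        rw [hsub, Int.natAbs_mul, Int.natAbs_sign_of_ne_zero h, one_mul, hcast,
          Int.natAbs_neg, Int.natAbs_natCast]
    calc ∑ i, ((d i).sign * (A (i : ℕ) : ℤ) - d i).natAbs
        = ∑ i : Fin n, (D (i : ℕ) - A (i : ℕ)) := Finset.sum_congr rfl fun i _ => key i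
      _ = ∑ j ∈ Finset.range n, (D j - A j) :=
          Fin.sum_univ_eq_sum_range (fun j => D j - A j) n
      _ = S n - f n := htel2 n
      _ ≤ e := by have : f n = min (S n) e := rfl; omega

theorem ker_is_QPL (n e : ℕ)
    (G : Type) [AddCommGroup G] [Fintype G]
    (φ : (Fin n → ℤ) →+ G)
    (hinj : Set.InjOn φ (leeSphere n e))
    (hsurj : Set.SurjOn φ (leeSphere n (e + 1)) Set.univ) :
    IsQPLCode e (φ.ker : Set (Fin n → ℤ)) := by
  constructor
  · intro v hv w hw hvw
    by_contra hcon
    push_neg at hcon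
    have hd : ∑ i, (v i - w i).natAbs ≤ 2 * e := by
      have : leeDist v w = ∑ i, (v i - w i).natAbs := rfl
      omega
    obtain ⟨a, b, hab, ha, hb⟩ := split_lemma e (fun i => v i - w i) hd
    have haS : a ∈ leeSphere n e := by
      simp only [leeSphere, leeDist, Set.mem_setOf_eq]
      simpa using ha
    have hbS : b ∈ leeSphere n e := by
      simp only [leeSphere, leeDist, Set.mem_setOf_eq]
      simpa using hb
    have habd : a - b = v - w := by
      funext i
      simpa using hab i
    have hφv : φ v = 0 := hv
    have hφw : φ w = 0 := hw
    have hφ : φ a = φ b := by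
      have h1 : φ (a - b) = 0 := by
        rw [habd, map_sub, hφv, hφw, sub_zero]
      rw [map_sub, sub_eq_zero] at h1
      exact h1
    have hab' : a = b := hinj haS hbS hφ
    apply hvw
    funext i
    have := hab i
    rw [hab'] at this
    simpa [sub_eq_zero] using this.symm
  · intro x
    obtain ⟨y, hy, hyx⟩ := hsurj (Set.mem_univ (φ x))
    refine ⟨x - y, ?_, ?_⟩
    · show φ (x - y) = 0
      rw [map_sub, hyx, sub_self]
    · have : leeDist x (x - y) = leeDist y 0 := by
        simp only [leeDist]
        apply Finset.sum_congr rfl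
        intro i _
        simp [Pi.sub_apply]
      rw [this]
      exact hy
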